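/- Let $p$ be a prime and let $G$ be a finite abelian $p$-group that is not cyclic (equivalently, of rank at least $2$). Then $p \in I(G)$; consequently $\mathbb{Z}_p[G]/I(G)$ is an $\mathbb{F}_p$-algebra, i.e., $p = 0$ in the quotient ring. (This is the group-ring form of Proposition 2.3: for a finite abelian $p$-group $A$ of rank at least $2$, $K_p^0(BA)/I_{tr}$ is an $\mathbb{F}_p$-algebra.) -/

import Mathlib

open scoped Classical

/-- The norm element `N_H = ∑_{h ∈ H} h` of a subgroup `H` in the group algebra `R[G]`. -/
noncomputable def normElt (R : Type*) [CommRing R] {G : Type*} [Group G] [Finite G]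
    (H : Subgroup G) : MonoidAlgebra R G :=
  letI : Fintype H := Fintype.ofFinite H
  ∑ h : H, MonoidAlgebra.single (h : G) 1

/-- The norm ideal `I(G) ⊆ R[G]`, generated by the norm elements of all nontrivial
subgroups of `G`. -/
noncomputable def normIdeal (R : Type*) [CommRing R] (G : Type*) [Group G] [Finite G] :
    Ideal (MonoidAlgebra R G) :=
  Ideal.span {x | ∃ H : Subgroup G, H ≠ ⊥ ∧ x = normElt R H}

section Aux

variable {R : Type*} [CommRing R] {G : Type*}

lemma normElt_eq [Group G] [Finite G] (H : Subgroup G) [Fintype H] :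
    normElt R H = ∑ h : H, MonoidAlgebra.single (h : G) (1 : R) := by
  have hinst : Fintype.ofFinite H = ‹Fintype H› := Subsingleton.elim _ _
  unfold normElt
  rw [hinst]

variable {p : ℕ} [Fact p.Prime] [CommGroup G] [Finite G]

lemma pow_val_inj {x : G} (hx : orderOf x = p) {a b : ZMod p}
    (hab : x ^ a.val = x ^ b.val) : a = b := by
  haveI : NeZero p := ⟨(Fact.out : p.Prime).ne_zero⟩
  have h1 : a.val % orderOf x = b.val % orderOf x := pow_inj_mod.mp hab
  rw [hx, Nat.mod_eq_of_lt a.val_lt, Nat.mod_eq_of_lt b.val_lt] at h1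
  exact ZMod.val_injective p h1

lemma exists_pow_val {x : G} (hx : orderOf x = p) {y : G}
    (hy : y ∈ Subgroup.zpowers x) : ∃ a : ZMod p, x ^ a.val = y := by
  haveI : NeZero p := ⟨(Fact.out : p.Prime).ne_zero⟩
  obtain ⟨n, hn⟩ := (mem_powers_iff_mem_zpowers).mpr hy
  refine ⟨(n : ZMod p), ?_⟩
  rw [ZMod.val_natCast, ← hx, pow_mod_orderOf]
  exact hn

/-- Enumeration of a cyclic subgroup of order `p` by `ZMod p`. -/
noncomputable def zmodEquivZPow {x : G} (hx : orderOf x = p) :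
    ZMod p ≃ (Subgroup.zpowers x) := by
  refine Equiv.ofBijective
    (fun a => ⟨x ^ a.val, Subgroup.mem_zpowers_iff.mpr ⟨(a.val : ℤ), zpow_natCast _ _⟩⟩)
    ⟨fun a b hab => pow_val_inj hx (by simpa using congrArg Subtype.val hab), fun y => ?_⟩
  obtain ⟨a, ha⟩ := exists_pow_val hx y.2
  exact ⟨a, Subtype.ext ha⟩

lemma normElt_zpowers {x : G} (hx : orderOf x = p) :
    normElt R (Subgroup.zpowers x)
      = ∑ a : ZMod p, MonoidAlgebra.single (x ^ a.val) (1 : R) := by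
  letI : Fintype (Subgroup.zpowers x) := Fintype.ofFinite _
  rw [normElt_eq]
  exact (Fintype.sum_equiv (zmodEquivZPow hx) _ _ (fun _ => rfl)).symm

lemma pow_val_mul {x : G} (hx : orderOf x = p) (a b : ZMod p) :
    x ^ (a * b).val = (x ^ a.val) ^ b.val := by
  have hmod := pow_mod_orderOf x (a.val * b.val)
  rw [hx] at hmod
  rw [ZMod.val_mul, hmod, pow_mul]

/-- The key identity: `p = ∑_i N_{⟨h k^i⟩} + N_{⟨k⟩} − N_{⟨h⟩ ⊔ ⟨k⟩}`. -/
lemma key_identity (R : Type*) [CommRing R] {h k : G}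
    (hh : orderOf h = p) (hk : orderOf k = p)
    (hdisj : ∀ x ∈ Subgroup.zpowers h, x ∈ Subgroup.zpowers k → x = 1) :
    (p : MonoidAlgebra R G)
      = (∑ i : ZMod p, normElt R (Subgroup.zpowers (h * k ^ (i.val))))
        + normElt R (Subgroup.zpowers k)
        - normElt R (Subgroup.zpowers h ⊔ Subgroup.zpowers k) := by
  haveI : NeZero p := ⟨(Fact.out : p.Prime).ne_zero⟩
  have hp : p.Prime := Fact.out
  have hne1 : ∀ x : G, orderOf x = p → x ≠ 1 := by
    intro x hx h1
    rw [h1, orderOf_one] at hx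
    exact hp.one_lt.ne' hx.symm
  -- order of h * k ^ c is p
  have horder : ∀ c : ℕ, orderOf (h * k ^ c) = p := by
    intro c
    have hpow : (h * k ^ c) ^ p = 1 := by
      have h1 : h ^ p = 1 := by rw [← hh]; exact pow_orderOf_eq_one h
      have h2 : k ^ p = 1 := by rw [← hk]; exact pow_orderOf_eq_one k
      rw [mul_pow, h1, one_mul, ← pow_mul, mul_comm c p, pow_mul, h2, one_pow]
    have hne : h * k ^ c ≠ 1 := by
      intro h1
      have hy : h = (k ^ c)⁻¹ := by
        rw [eq_inv_iff_mul_eq_one]; exact h1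
      have : h ∈ Subgroup.zpowers k := by
        rw [hy]; exact inv_mem (Subgroup.mem_zpowers_iff.mpr ⟨(c : ℤ), zpow_natCast _ _⟩)
      exact hne1 h hh (hdisj h (Subgroup.mem_zpowers h) this)
    have hdvd : orderOf (h * k ^ c) ∣ p := orderOf_dvd_of_pow_eq_one hpow
    rcases (Nat.Prime.eq_one_or_self_of_dvd hp _ hdvd) with h1 | h1
    · exact absurd (orderOf_eq_one_iff.mp h1) hne
    · exact h1
  -- the "row sum" function
  set F : ZMod p → MonoidAlgebra R G :=
    fun j => ∑ c : ZMod p, MonoidAlgebra.single (h ^ j.val * k ^ c.val) (1 : R) with hF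
  -- rewrite the three norms
  have hA : (∑ i : ZMod p, normElt R (Subgroup.zpowers (h * k ^ (i.val))))
      = (p : ℕ) • MonoidAlgebra.single (1 : G) (1 : R)
        + ∑ j ∈ Finset.univ.erase (0 : ZMod p), F j := by
    have step1 : (∑ i : ZMod p, normElt R (Subgroup.zpowers (h * k ^ (i.val))))
        = ∑ j : ZMod p, ∑ i : ZMod p,
            MonoidAlgebra.single (h ^ j.val * k ^ ((i * j).val)) (1 : R) := by
      rw [Finset.sum_comm]
      refine Finset.sum_congr rfl fun i _ => ?_
      rw [normElt_zpowers (horder i.val)]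
      refine Finset.sum_congr rfl fun j _ => ?_
      congr 1
      rw [mul_pow, pow_val_mul hk i j]
    rw [step1, ← Finset.add_sum_erase _ _ (Finset.mem_univ (0 : ZMod p))]
    congr 1
    · -- the j = 0 term
      have : ∀ i : ZMod p,
          MonoidAlgebra.single (h ^ (0 : ZMod p).val * k ^ ((i * 0).val)) (1 : R)
            = MonoidAlgebra.single (1 : G) (1 : R) := by
        intro i
        rw [mul_zero, ZMod.val_zero, pow_zero, pow_zero, one_mul]
      rw [Finset.sum_congr rfl fun i _ => this i, Finset.sum_const, Finset.card_univ,
        ZMod.card]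
    · -- the j ≠ 0 terms
      refine Finset.sum_congr rfl fun j hj => ?_
      have hj0 : j ≠ 0 := (Finset.mem_erase.mp hj).1
      exact Fintype.sum_equiv (Equiv.mulRight₀ j hj0) _ _ (fun i => rfl)
  have hB : normElt R (Subgroup.zpowers k) = F 0 := by
    rw [normElt_zpowers hk, hF]
    refine Finset.sum_congr rfl fun c _ => ?_
    rw [ZMod.val_zero, pow_zero, one_mul]
  have hC : normElt R (Subgroup.zpowers h ⊔ Subgroup.zpowers k)
      = F 0 + ∑ j ∈ Finset.univ.erase (0 : ZMod p), F j := by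
    letI : Fintype (Subgroup.zpowers h ⊔ Subgroup.zpowers k : Subgroup G) := Fintype.ofFinite _
    have hmemf : ∀ ab : ZMod p × ZMod p,
        h ^ ab.1.val * k ^ ab.2.val ∈ (Subgroup.zpowers h ⊔ Subgroup.zpowers k : Subgroup G) :=
      fun ab => Subgroup.mul_mem _
        (Subgroup.mem_sup_left (Subgroup.mem_zpowers_iff.mpr ⟨(ab.1.val : ℤ), zpow_natCast _ _⟩))
        (Subgroup.mem_sup_right (Subgroup.mem_zpowers_iff.mpr ⟨(ab.2.val : ℤ), zpow_natCast _ _⟩))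
    have hbij : Function.Bijective
        (fun ab : ZMod p × ZMod p =>
          (⟨h ^ ab.1.val * k ^ ab.2.val, hmemf ab⟩ :
            (Subgroup.zpowers h ⊔ Subgroup.zpowers k : Subgroup G))) := by
      constructor
      · rintro ⟨a, b⟩ ⟨c, d⟩ hab
        have habc : h ^ a.val * k ^ b.val = h ^ c.val * k ^ d.val := by
          simpa using congrArg Subtype.val hab
        have hx : h ^ a.val / h ^ c.val = k ^ d.val / k ^ b.val :=
          div_eq_div_iff_mul_eq_mul.mpr (by rw [habc, mul_comm])
        have hmemh : h ^ a.val / h ^ c.val ∈ Subgroup.zpowers h :=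
          Subgroup.div_mem _
            (Subgroup.mem_zpowers_iff.mpr ⟨(a.val : ℤ), zpow_natCast _ _⟩)
            (Subgroup.mem_zpowers_iff.mpr ⟨(c.val : ℤ), zpow_natCast _ _⟩)
        have hmemk : h ^ a.val / h ^ c.val ∈ Subgroup.zpowers k := by
          rw [hx]
          exact Subgroup.div_mem _
            (Subgroup.mem_zpowers_iff.mpr ⟨(d.val : ℤ), zpow_natCast _ _⟩)
            (Subgroup.mem_zpowers_iff.mpr ⟨(b.val : ℤ), zpow_natCast _ _⟩)
        have h1 : h ^ a.val / h ^ c.val = 1 := hdisj _ hmemh hmemk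
        have hac : a = c := pow_val_inj hh (div_eq_one.mp h1)
        have h2 : k ^ d.val / k ^ b.val = 1 := by rw [← hx, h1]
        have hbd : d = b := pow_val_inj hk (div_eq_one.mp h2)
        exact Prod.ext hac hbd.symm
      · rintro ⟨y, hy⟩
        obtain ⟨u, hu, v, hv, huv⟩ := Subgroup.mem_sup.mp hy
        obtain ⟨a, ha⟩ := exists_pow_val hh hu
        obtain ⟨b, hb⟩ := exists_pow_val hk hv
        exact ⟨(a, b), Subtype.ext (show h ^ a.val * k ^ b.val = y by rw [ha, hb, huv])⟩
    rw [normElt_eq]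
    rw [← Fintype.sum_equiv (Equiv.ofBijective _ hbij)
      (fun ab : ZMod p × ZMod p => MonoidAlgebra.single (h ^ ab.1.val * k ^ ab.2.val) (1 : R))
      (fun s => MonoidAlgebra.single (s : G) (1 : R)) (fun _ => rfl)]
    rw [Fintype.sum_prod_type, ← Finset.add_sum_erase _ _ (Finset.mem_univ (0 : ZMod p))]
  rw [hA, hB, hC]
  have hone : MonoidAlgebra.single (1 : G) (1 : R) = (1 : MonoidAlgebra R G) :=
    MonoidAlgebra.one_def.symm
  rw [hone]
  rw [nsmul_eq_mul, mul_one]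
  ring

/-- A non-cyclic finite abelian `p`-group contains two "independent" elements of order `p`. -/
lemma exists_indep (p : ℕ) [Fact p.Prime] (G : Type*) [CommGroup G] [Finite G]
    (hG : IsPGroup p G) (hnc : ¬ IsCyclic G) :
    ∃ h k : G, orderOf h = p ∧ orderOf k = p ∧ k ∉ Subgroup.zpowers h := by
  have hp : p.Prime := Fact.out
  obtain ⟨ι, hι, n, hn, ⟨e⟩⟩ := CommGroup.equiv_prod_multiplicative_zmod_of_finite G
  haveI : ∀ i, NeZero (n i) := fun i => ⟨by have := hn i; omega⟩
  set F : ι → Type := fun i => Multiplicative (ZMod (n i)) with hFdef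
  have hP : IsPGroup p (∀ i, F i) := hG.of_equiv e
  -- each factor is a p-group
  have hPi : ∀ i, IsPGroup p (F i) := by
    intro i g
    obtain ⟨m, hm⟩ := hP (Pi.mulSingle i g)
    exact ⟨m, by simpa using congrFun hm i⟩
  by_cases hsub : Subsingleton ι
  · exfalso
    apply hnc
    cases isEmpty_or_nonempty ι with
    | inl hempty =>
      haveI : Subsingleton (∀ i, F i) := ⟨fun a b => funext fun i => (hempty.false i).elim⟩
      haveI : Subsingleton G := e.toEquiv.subsingleton
      infer_instance
    | inr hne =>
      haveI : Unique ι := ⟨⟨hne.some⟩, fun i => Subsingleton.elim _ _⟩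
      have e2 : (∀ i, F i) ≃* F default := MulEquiv.piUnique F
      haveI : IsCyclic (F default) := by
        unfold F; infer_instance
      exact isCyclic_of_surjective (e.symm.toMonoidHom.comp e2.symm.toMonoidHom)
        (e.symm.surjective.comp e2.symm.surjective)
  · haveI : Nontrivial ι := not_subsingleton_iff_nontrivial.mp hsub
    obtain ⟨i, j, hij⟩ := exists_pair_ne ι
    -- elements of order p in factors i and j
    have hcard : ∀ i, p ∣ Nat.card (F i) := by
      intro i
      haveI : Finite (F i) := by unfold F; infer_instance
      obtain ⟨m, hm⟩ := IsPGroup.iff_card.mp (hPi i)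
      have h1 : 1 < Nat.card (F i) := by
        have : Nat.card (F i) = n i := by
          unfold F
          simp [Nat.card_eq_fintype_card, ZMod.card]
        rw [this]; exact hn i
      rw [hm] at h1 ⊢
      exact dvd_pow_self p (fun h0 => by simp [h0] at h1)
    obtain ⟨gi, hgi⟩ := exists_prime_orderOf_dvd_card' (G := F i) p (hcard i)
    obtain ⟨gj, hgj⟩ := exists_prime_orderOf_dvd_card' (G := F j) p (hcard j)
    refine ⟨e.symm (Pi.mulSingle i gi), e.symm (Pi.mulSingle j gj), ?_, ?_, ?_⟩
    · have h1 := orderOf_injective e.symm.toMonoidHom e.symm.injective (Pi.mulSingle i gi)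
      have h2 := orderOf_injective (MonoidHom.mulSingle F i) (Pi.mulSingle_injective (M := F) i) gi
      rw [MulEquiv.coe_toMonoidHom] at h1
      rw [h1]
      rw [MonoidHom.mulSingle_apply] at h2
      rw [h2]
      exact hgi
    · have h1 := orderOf_injective e.symm.toMonoidHom e.symm.injective (Pi.mulSingle j gj)
      have h2 := orderOf_injective (MonoidHom.mulSingle F j) (Pi.mulSingle_injective (M := F) j) gj
      rw [MulEquiv.coe_toMonoidHom] at h1
      rw [h1]
      rw [MonoidHom.mulSingle_apply] at h2
      rw [h2]
      exact hgj
    · intro hmem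
      obtain ⟨m, hm⟩ := Subgroup.mem_zpowers_iff.mp hmem
      have hm' : (Pi.mulSingle i gi) ^ m = Pi.mulSingle j gj := by
        have := congrArg e hm
        rwa [map_zpow, MulEquiv.apply_symm_apply, MulEquiv.apply_symm_apply] at this
      have := congrFun hm' j
      rw [Pi.pow_apply, Pi.mulSingle_eq_same, Pi.mulSingle_eq_of_ne (Ne.symm hij) gi] at this
      rw [one_zpow] at this
      have : orderOf gj = 1 := by rw [← this, orderOf_one]
      rw [hgj] at this
      exact hp.one_lt.ne' this

end Aux

theorem p_mem_norm_ideal_of_not_cyclic (p : ℕ) [Fact p.Prime]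
    (G : Type*) [CommGroup G] [Finite G] (hG : IsPGroup p G) (hnc : ¬ IsCyclic G) :
    (p : MonoidAlgebra ℤ_[p] G) ∈ normIdeal ℤ_[p] G ∧
      (p : MonoidAlgebra ℤ_[p] G ⧸ normIdeal ℤ_[p] G) = 0 := by
  have hp : p.Prime := Fact.out
  obtain ⟨h, k, hh, hk, hkh⟩ := exists_indep p G hG hnc
  -- disjointness of the two cyclic subgroups
  have hdisj : ∀ x ∈ Subgroup.zpowers h, x ∈ Subgroup.zpowers k → x = 1 := by
    intro x hxh hxk
    by_contra hx1
    have hdvd : orderOf x ∣ p := hk ▸ orderOf_dvd_of_mem_zpowers hxk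
    have hordx : orderOf x = p := by
      rcases hp.eq_one_or_self_of_dvd _ hdvd with h1 | h1
      · exact absurd (orderOf_eq_one_iff.mp h1) hx1
      · exact h1
    have hle : Subgroup.zpowers x ≤ Subgroup.zpowers k := by
      rwa [Subgroup.zpowers_le]
    have hcard : Nat.card (Subgroup.zpowers k) ≤ Nat.card (Subgroup.zpowers x) := by
      rw [Nat.card_zpowers, Nat.card_zpowers, hordx, hk]
    have heq : Subgroup.zpowers x = Subgroup.zpowers k :=
      Subgroup.eq_of_le_of_card_ge hle hcard
    have hkx : k ∈ Subgroup.zpowers x := heq ▸ Subgroup.mem_zpowers k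
    have hkh' : k ∈ Subgroup.zpowers h :=
      (Subgroup.zpowers_le.mpr hxh) hkx
    exact hkh hkh'
  have hmem : (p : MonoidAlgebra ℤ_[p] G) ∈ normIdeal ℤ_[p] G := by
    rw [key_identity (p := p) ℤ_[p] hh hk hdisj]
    have hne1 : ∀ x : G, orderOf x = p → Subgroup.zpowers x ≠ ⊥ := by
      intro x hx hbot
      have : x = 1 := by
        have := Subgroup.mem_zpowers x
        rwa [hbot, Subgroup.mem_bot] at this
      rw [this, orderOf_one] at hx
      exact hp.one_lt.ne' hx.symm
    have horder : ∀ c : ℕ, orderOf (h * k ^ c) = p := by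
      intro c
      have hpow : (h * k ^ c) ^ p = 1 := by
        have h1 : h ^ p = 1 := by rw [← hh]; exact pow_orderOf_eq_one h
        have h2 : k ^ p = 1 := by rw [← hk]; exact pow_orderOf_eq_one k
        rw [mul_pow, h1, one_mul, ← pow_mul, mul_comm c p, pow_mul, h2, one_pow]
      have hne : h * k ^ c ≠ 1 := by
        intro h1
        have hy : h = (k ^ c)⁻¹ := by rw [eq_inv_iff_mul_eq_one]; exact h1
        have hmem : h ∈ Subgroup.zpowers k := by
          rw [hy]; exact inv_mem (Subgroup.mem_zpowers_iff.mpr ⟨(c : ℤ), zpow_natCast _ _⟩)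
        have : h = 1 := hdisj h (Subgroup.mem_zpowers h) hmem
        rw [this, orderOf_one] at hh
        exact hp.one_lt.ne' hh.symm
      rcases hp.eq_one_or_self_of_dvd _ (orderOf_dvd_of_pow_eq_one hpow) with h1 | h1
      · exact absurd (orderOf_eq_one_iff.mp h1) hne
      · exact h1
    refine sub_mem (add_mem ?_ ?_) ?_
    · refine Ideal.sum_mem _ fun i _ => Ideal.subset_span ?_
      exact ⟨_, hne1 _ (horder i.val), rfl⟩
    · exact Ideal.subset_span ⟨_, hne1 _ hk, rfl⟩
    · refine Ideal.subset_span ⟨_, ?_, rfl⟩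
      intro hbot
      exact hne1 _ hh (le_bot_iff.mp (hbot ▸ le_sup_left))
  refine ⟨hmem, ?_⟩
  have : (p : MonoidAlgebra ℤ_[p] G ⧸ normIdeal ℤ_[p] G)
      = Ideal.Quotient.mk (normIdeal ℤ_[p] G) (p : MonoidAlgebra ℤ_[p] G) := by
    rw [map_natCast]
  rw [this, Ideal.Quotient.eq_zero_iff_mem]
  exact hmem
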